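/- Renormalization of translated cone exchanges (Theorem A). Let k ≥ 1 be an integer, λ = 1/(k+Φ) and η = 1 − kλ. Then for every admissible α and every permutation τ of {1,…,d}, the first return map R of F to the middle cone P_c is renormalizable near the origin: there exists y* > 0 such that for every z ∈ P_c with Im z < y*, the return times k(z) and k(Φ²z) are finite and R(Φ²z) = Φ²·R(z) (note Φ²z ∈ P_c since P_c is a cone). -/

import Mathlib

open Complex Real Set
open scoped Classical

set_option maxHeartbeats 1000000
noncomputable section

/-- The reciprocal golden ratio Φ = (√5 − 1)/2. -/
def Phi : ℝ := (Real.sqrt 5 - 1) / 2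

/-- β = (π − |α|)/2. -/
def beta {d : ℕ} (α : Fin d → ℝ) : ℝ := (π - ∑ k, α k) / 2

/-- σ_j = β + α_1 + … + α_j (partial sums of the angles, shifted by β). -/
def sig {d : ℕ} (α : Fin d → ℝ) (j : ℕ) : ℝ :=
  beta α + ∑ k ∈ Finset.univ.filter (fun k : Fin d => (k : ℕ) < j), α k

/-- θ_j = Σ_{τ(k)<τ(j)} α_k − Σ_{k<j} α_k. -/
def theta {d : ℕ} (α : Fin d → ℝ) (τ : Equiv.Perm (Fin d)) (j : Fin d) : ℝ :=
  (∑ k ∈ Finset.univ.filter (fun k : Fin d => τ k < τ j), α k)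
  - ∑ k ∈ Finset.univ.filter (fun k : Fin d => k < j), α k

/-- The cone P_0 = {z ∈ ℍ : arg z ∈ [0, β)}. -/
def P0 {d : ℕ} (α : Fin d → ℝ) : Set ℂ :=
  {z : ℂ | 0 ≤ z.im ∧ 0 ≤ z.arg ∧ z.arg < beta α}

/-- The middle cones P_1, …, P_d (0-indexed by `j : Fin d`):
P_1 corresponds to arg ∈ [β, β+α_1], and P_j (j ≥ 2) to arg ∈ (σ_{j−1}, σ_j]. -/
def Pmid {d : ℕ} (α : Fin d → ℝ) (j : Fin d) : Set ℂ :=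
  {z : ℂ | 0 ≤ z.im ∧
    (if (j : ℕ) = 0 then sig α 0 ≤ z.arg else sig α (j : ℕ) < z.arg) ∧
    z.arg ≤ sig α ((j : ℕ) + 1)}

/-- The cone P_{d+1} = {z ∈ ℍ : arg z ∈ (π−β, π]}. -/
def Pend {d : ℕ} (α : Fin d → ℝ) : Set ℂ :=
  {z : ℂ | 0 ≤ z.im ∧ π - beta α < z.arg ∧ z.arg ≤ π}

/-- The middle cone P_c = P_1 ∪ … ∪ P_d. -/
def Pc {d : ℕ} (α : Fin d → ℝ) : Set ℂ := ⋃ j, Pmid α j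

/-- The exchange map E. -/
def Emap {d : ℕ} (α : Fin d → ℝ) (τ : Equiv.Perm (Fin d)) (z : ℂ) : ℂ :=
  if h : ∃ j, z ∈ Pmid α j then
    z * Complex.exp ((theta α τ h.choose : ℝ) * Complex.I)
  else z

/-- The translation map G. -/
def Gmap {d : ℕ} (α : Fin d → ℝ) (lam eta : ℝ) (z : ℂ) : ℂ :=
  if z ∈ P0 α then z - 1
  else if z ∈ Pend α then z + (lam : ℂ)
  else if z ∈ Pc α then z - (eta : ℂ)
  else z

/-- The translated cone exchange F = G ∘ E. -/
def Fmap {d : ℕ} (α : Fin d → ℝ) (τ : Equiv.Perm (Fin d)) (lam eta : ℝ) (z : ℂ) : ℂ :=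
  Gmap α lam eta (Emap α τ z)

/-- The set of positive times at which the orbit of z visits P_c. -/
def hitSet {d : ℕ} (α : Fin d → ℝ) (τ : Equiv.Perm (Fin d)) (lam eta : ℝ) (z : ℂ) : Set ℕ :=
  {n : ℕ | 0 < n ∧ (Fmap α τ lam eta)^[n] z ∈ Pc α}

/-- The first hitting time k(z) of z to P_c (0 if the orbit never returns). -/
def hitTime {d : ℕ} (α : Fin d → ℝ) (τ : Equiv.Perm (Fin d)) (lam eta : ℝ) (z : ℂ) : ℕ :=
  sInf (hitSet α τ lam eta z)

/-- The first return map R(z) = F^{k(z)}(z). -/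
def Rmap {d : ℕ} (α : Fin d → ℝ) (τ : Equiv.Perm (Fin d)) (lam eta : ℝ) (z : ℂ) : ℂ :=
  (Fmap α τ lam eta)^[hitTime α τ lam eta z] z



lemma sqrt5_sq : Real.sqrt 5 ^ 2 = 5 := Real.sq_sqrt (by norm_num)

lemma sqrt5_gt : (2.23 : ℝ) < Real.sqrt 5 := by
  have := Real.sq_sqrt (show (0:ℝ) ≤ 5 by norm_num)
  nlinarith [Real.sqrt_nonneg 5]

lemma sqrt5_lt : Real.sqrt 5 < 2.24 := by
  have := Real.sq_sqrt (show (0:ℝ) ≤ 5 by norm_num)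
  nlinarith [Real.sqrt_nonneg 5]

lemma Phi_pos : 0 < Phi := by unfold Phi; nlinarith [sqrt5_gt]
lemma Phi_lt_one : Phi < 1 := by unfold Phi; nlinarith [sqrt5_lt]
lemma Phi_sq : Phi ^ 2 = 1 - Phi := by unfold Phi; nlinarith [sqrt5_sq]
lemma Phi_gt_half : 1/2 < Phi := by unfold Phi; nlinarith [sqrt5_gt]
lemma Phi_sq_pos : 0 < Phi ^ 2 := pow_pos Phi_pos 2
lemma Phi_sq_lt_half : Phi ^ 2 < 1/2 := by rw [Phi_sq]; linarith [Phi_gt_half]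

lemma Phi_irr : Irrational Phi := by
  have h5 : Irrational (Real.sqrt 5) := by
    have : Irrational (Real.sqrt (5:ℕ)) := (by norm_num : Nat.Prime 5).irrational_sqrt
    simpa using this
  have h1 : Irrational (Real.sqrt 5 - 1) := by
    simpa using h5.sub_intCast 1
  simpa [Phi, div_eq_mul_inv] using h1.div_intCast (by norm_num : (2:ℤ) ≠ 0)

/-- signed distance of nΦ to the nearest integer -/
def xi (n : ℕ) : ℝ := n * Phi - round ((n : ℝ) * Phi)

lemma round_eq_of {x : ℝ} {m : ℤ} (h : |x - m| < 1/2) : round x = m := by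
  have h1 : |x - round x| ≤ |x - m| := round_le x m

  have hb := abs_lt.mp (h1.trans_lt h)
  have hc := abs_lt.mp h
  have h3 : |(round x : ℝ) - m| < 1 := by
    rw [abs_lt]; constructor <;> nlinarith
  have h4 : ((round x : ℝ) - m) = ((round x - m : ℤ) : ℝ) := by push_cast; ring
  rw [h4] at h3
  have h5 : |round x - m| < 1 := by exact_mod_cast (by rwa [← Int.cast_abs] at h3 : ((|round x - m| : ℤ) : ℝ) < 1)
  have h6 := abs_lt.mp h5
  omega

lemma abs_xi_le (n : ℕ) : |xi n| ≤ 1/2 := abs_sub_round _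

lemma round_cases (x : ℝ) : round x = ⌊x⌋ ∨ round x = ⌊x⌋ + 1 := by
  rw [round_eq]
  have h1 : ⌊x⌋ ≤ ⌊x + 1/2⌋ := Int.floor_le_floor (by linarith)
  have h2 : ⌊x + 1/2⌋ ≤ ⌊x + 1⌋ := Int.floor_le_floor (by linarith)
  rw [show x + 1 = x + (1:ℤ) by push_cast; ring, Int.floor_add_intCast] at h2
  omega

lemma round_eq_floor_of {x : ℝ} (h : Int.fract x < 1/2) : round x = ⌊x⌋ := by
  apply round_eq_of
  have h2 : x - ⌊x⌋ = Int.fract x := Int.self_sub_floor x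
  rw [_root_.abs_of_nonneg (by rw [h2]; exact Int.fract_nonneg x), h2]
  exact h

lemma round_eq_floor_add_one_of {x : ℝ} (h : 1/2 < Int.fract x) : round x = ⌊x⌋ + 1 := by
  apply round_eq_of
  have h1 := Int.fract_lt_one x
  have h2 : x - ⌊x⌋ = Int.fract x := Int.self_sub_floor x
  rw [abs_lt]; push_cast; constructor <;> linarith

lemma xi_eq_fract_of {n : ℕ} (h : Int.fract ((n:ℝ) * Phi) < 1/2) : xi n = Int.fract ((n:ℝ) * Phi) := by
  rw [xi, round_eq_floor_of h, Int.self_sub_floor]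

lemma xi_eq_fract_sub_one_of {n : ℕ} (h : 1/2 < Int.fract ((n:ℝ) * Phi)) :
    xi n = Int.fract ((n:ℝ) * Phi) - 1 := by
  rw [xi, round_eq_floor_add_one_of h]
  push_cast
  rw [← Int.self_sub_floor]; ring

lemma xi_cases (n : ℕ) : xi n = Int.fract ((n:ℝ) * Phi) ∨ xi n = Int.fract ((n:ℝ) * Phi) - 1 := by
  rcases round_cases ((n:ℝ) * Phi) with h | h
  · left; rw [xi, h, Int.self_sub_floor]
  · right; rw [xi, h]; push_cast; rw [← Int.self_sub_floor]; ring

lemma nPhi_irr {n : ℕ} (hn : 1 ≤ n) : Irrational ((n:ℝ) * Phi) :=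
  Phi_irr.natCast_mul (by omega)

lemma fract_nPhi_pos {n : ℕ} (hn : 1 ≤ n) : 0 < Int.fract ((n:ℝ) * Phi) := by
  rw [Int.fract_pos]
  exact (nPhi_irr hn).ne_int _

lemma fract_nPhi_lt_one (n : ℕ) : Int.fract ((n:ℝ) * Phi) < 1 := Int.fract_lt_one _

/-- Fibonacci identity: fib(n+1)·Φ − fib n = (−1)^n Φ^{n+1}. -/
lemma fib_xi (n : ℕ) : (Nat.fib (n+1) : ℝ) * Phi - Nat.fib n = (-1)^n * Phi^(n+1) := by
  induction n with
  | zero => simp [Nat.fib]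
  | succ m ih =>
    have hfib : (Nat.fib (m+2) : ℝ) = Nat.fib (m+1) + Nat.fib m := by
      rw [Nat.fib_add_two]; push_cast; ring
    have hs : Phi^2 = 1 - Phi := Phi_sq
    have : (Nat.fib (m+2) : ℝ) * Phi - Nat.fib (m+1)
        = -Phi * ((Nat.fib (m+1) : ℝ) * Phi - Nat.fib m) := by
      rw [hfib]; nlinarith [hs]
    rw [this, ih]; ring

def Jset (lo hi : ℝ) : Set ℕ := {n : ℕ | 1 ≤ n ∧ lo ≤ xi n ∧ xi n ≤ hi}

lemma Phi_pow_pos (n : ℕ) : 0 < Phi ^ n := pow_pos Phi_pos n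

lemma Jset_nonempty {lo hi : ℝ} (hlo : lo ≤ 0) (hhi : 0 ≤ hi) (hne : lo < 0 ∨ 0 < hi) :
    (Jset lo hi).Nonempty := by
  -- choose bound
  rcases hne with h | h
  · -- negative side: take m odd, xi (fib (m+1)) = -Phi^(m+1) ∈ [lo, 0]
    obtain ⟨n0, hn0⟩ := exists_pow_lt_of_lt_one (lt_min (neg_pos.mpr h) (by norm_num : (0:ℝ) < 1/2)) Phi_lt_one
    -- choose m odd with m+1 ≥ n0... take m := if n0 odd then n0 else n0+1; we need (-1)^m = -1
    set m : ℕ := if Odd n0 then n0 else n0 + 1 with hm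
    have hmodd : Odd m := by
      by_cases hcase : Odd n0
      · simpa [hm, hcase]
      · have : Even n0 := Nat.not_odd_iff_even.mp hcase
        simp [hm, hcase, Even.add_one this]
    have hmge : Phi ^ (m+1) ≤ Phi ^ n0 := by
      apply pow_le_pow_of_le_one Phi_pos.le Phi_lt_one.le
      by_cases hcase : Odd n0 <;> simp [hm, hcase] <;> omega
    have hsmall : Phi^(m+1) < min (-lo) (1/2) := lt_of_le_of_lt hmge hn0
    have hneg : ((-1:ℝ))^m = -1 := Odd.neg_one_pow hmodd
    have hfib := fib_xi m
    have hround : round ((Nat.fib (m+1) : ℝ) * Phi) = (Nat.fib m : ℤ) := by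
      apply round_eq_of
      have : (Nat.fib (m+1) : ℝ) * Phi - (Nat.fib m : ℤ) = (-1)^m * Phi^(m+1) := by
        push_cast; linarith [hfib]
      rw [this, hneg]
      rw [abs_of_nonpos (by nlinarith [Phi_pow_pos (m+1)])]
      have := lt_min_iff.mp hsmall
      nlinarith [this.2]
    have hxi : xi (Nat.fib (m+1)) = -Phi^(m+1) := by
      rw [xi, hround]
      push_cast
      rw [show (Nat.fib (m+1):ℝ) * Phi - Nat.fib m = (-1)^m * Phi^(m+1) from hfib, hneg]; ring
    refine ⟨Nat.fib (m+1), Nat.fib_pos.mpr (by omega), ?_, ?_⟩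
    · rw [hxi]
      have := (lt_min_iff.mp hsmall).1
      linarith
    · rw [hxi]; linarith [Phi_pow_pos (m+1)]
  · -- positive side: m even
    obtain ⟨n0, hn0⟩ := exists_pow_lt_of_lt_one (lt_min h (by norm_num : (0:ℝ) < 1/2)) Phi_lt_one
    set m : ℕ := if Even n0 then n0 else n0 + 1 with hm
    have hmeven : Even m := by
      by_cases hcase : Even n0
      · simpa [hm, hcase]
      · have : Odd n0 := Nat.not_even_iff_odd.mp hcase
        simp [hm, hcase, Odd.add_one this]
    have hmge : Phi ^ (m+1) ≤ Phi ^ n0 := by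
      apply pow_le_pow_of_le_one Phi_pos.le Phi_lt_one.le
      by_cases hcase : Even n0 <;> simp [hm, hcase] <;> omega
    have hsmall : Phi^(m+1) < min hi (1/2) := lt_of_le_of_lt hmge hn0
    have hpos1 : ((-1:ℝ))^m = 1 := Even.neg_one_pow hmeven
    have hfib := fib_xi m
    have hround : round ((Nat.fib (m+1) : ℝ) * Phi) = (Nat.fib m : ℤ) := by
      apply round_eq_of
      have : (Nat.fib (m+1) : ℝ) * Phi - (Nat.fib m : ℤ) = (-1)^m * Phi^(m+1) := by
        push_cast; linarith [hfib]
      rw [this, hpos1, one_mul, _root_.abs_of_nonneg (Phi_pow_pos (m+1)).le]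
      exact hsmall.trans_le (min_le_right _ _)
    have hxi : xi (Nat.fib (m+1)) = Phi^(m+1) := by
      rw [xi, hround]
      push_cast
      rw [show (Nat.fib (m+1):ℝ) * Phi - Nat.fib m = (-1)^m * Phi^(m+1) from hfib, hpos1]; ring
    refine ⟨Nat.fib (m+1), Nat.fib_pos.mpr (by omega), ?_, ?_⟩
    · rw [hxi]; linarith [Phi_pow_pos (m+1)]
    · rw [hxi]; linarith [(lt_min_iff.mp hsmall).1]

lemma Phi_gt_615 : 0.615 < Phi := by unfold Phi; nlinarith [sqrt5_gt]
lemma Phi_lt_62 : Phi < 0.62 := by unfold Phi; nlinarith [sqrt5_lt]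

lemma PhiTwoSq : (Phi + 2) * Phi^2 = 1 := by nlinarith [Phi_sq]

lemma xi_one : xi 1 = Phi - 1 := by
  have h : round ((1:ℕ) * Phi : ℝ) = (1:ℤ) := by
    apply round_eq_of
    rw [abs_of_nonpos (by push_cast; nlinarith [Phi_lt_62])]
    push_cast; nlinarith [Phi_gt_615]
  rw [xi, h]; push_cast; ring

lemma xi_two : xi 2 = 2 * Phi - 1 := by
  have h : round ((2:ℕ) * Phi : ℝ) = (1:ℤ) := by
    apply round_eq_of
    rw [_root_.abs_of_nonneg (by push_cast; nlinarith [Phi_gt_615])]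
    push_cast; nlinarith [Phi_lt_62]
  rw [xi, h]; push_cast; ring

lemma xi_three : xi 3 = 3 * Phi - 2 := by
  have h : round ((3:ℕ) * Phi : ℝ) = (2:ℤ) := by
    apply round_eq_of
    rw [abs_of_nonpos (by push_cast; nlinarith [Phi_lt_62])]
    push_cast; nlinarith [Phi_gt_615]
  rw [xi, h]; push_cast; ring

lemma round_nonneg_of {x : ℝ} (hx : 0 ≤ x) : 0 ≤ round x := by
  rw [round_eq]
  exact Int.le_floor.mpr (by push_cast; linarith)

lemma round_mono' {x y : ℝ} (h : x ≤ y) : round x ≤ round y := by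
  rw [round_eq, round_eq]
  exact Int.floor_le_floor (by linarith)

lemma transfer {lo hi : ℝ} (hlo0 : lo ≤ 0) (hhi0 : 0 ≤ hi) (hlo : -Phi^2 < lo)
    (hhi : hi < Phi^2) (hne : lo < 0 ∨ 0 < hi) :
    (Jset lo hi).Nonempty ∧ (Jset (Phi^2*lo) (Phi^2*hi)).Nonempty ∧
    xi (sInf (Jset (Phi^2*lo) (Phi^2*hi))) = Phi^2 * xi (sInf (Jset lo hi)) := by
  set f : ℕ → ℕ := fun n => 2*n + (round ((n:ℝ)*Phi)).toNat with hf
  have hrnn : ∀ n : ℕ, 0 ≤ round ((n:ℝ)*Phi) :=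
    fun n => round_nonneg_of (mul_nonneg (Nat.cast_nonneg n) Phi_pos.le)
  have hcast : ∀ n : ℕ, ((f n : ℕ) : ℝ) = 2*n + round ((n:ℝ)*Phi) := by
    intro n
    have h1 : ((round ((n:ℝ)*Phi)).toNat : ℝ) = ((round ((n:ℝ)*Phi) : ℤ) : ℝ) := by
      exact_mod_cast congrArg (Int.cast : ℤ → ℝ) (Int.toNat_of_nonneg (hrnn n))
    simp only [hf]
    push_cast
    rw [h1]
  have hfwd : ∀ n, n ∈ Jset lo hi → (f n ∈ Jset (Phi^2*lo) (Phi^2*hi) ∧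
      xi (f n) = Phi^2 * xi n) := by
    intro n hn
    obtain ⟨hn1, hnlo, hnhi⟩ := hn
    set m : ℤ := round ((n:ℝ)*Phi) with hm
    have hxin : xi n = (n:ℝ)*Phi - m := rfl
    have key : ((f n : ℕ) : ℝ) * Phi - ((n + m : ℤ) : ℝ) = Phi^2 * xi n := by
      rw [hcast n, hxin]; push_cast
      linear_combination ((m:ℝ) - (n:ℝ)*Phi + n) * Phi_sq
    have habs : |Phi^2 * xi n| < 1/2 := by
      rw [abs_mul, _root_.abs_of_nonneg Phi_sq_pos.le]
      calc Phi^2 * |xi n| ≤ Phi^2 * (1/2) := by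
            exact mul_le_mul_of_nonneg_left (abs_xi_le n) Phi_sq_pos.le
        _ < 1/2 := by nlinarith [Phi_sq_pos, Phi_sq_lt_half]
    have hround : round (((f n : ℕ) : ℝ) * Phi) = n + m :=
      round_eq_of (by rw [key]; exact habs)
    have hxif : xi (f n) = Phi^2 * xi n := by rw [xi, hround, key]
    refine ⟨⟨by simp only [hf]; omega, ?_, ?_⟩, hxif⟩
    · rw [hxif]; exact mul_le_mul_of_nonneg_left hnlo Phi_sq_pos.le
    · rw [hxif]; exact mul_le_mul_of_nonneg_left hnhi Phi_sq_pos.le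
  have hbwd : ∀ n, n ∈ Jset (Phi^2*lo) (Phi^2*hi) →
      ∃ n0, n0 ∈ Jset lo hi ∧ f n0 = n := by
    intro n hn
    obtain ⟨hn1, hnlo, hnhi⟩ := hn
    have hxabs : |xi n| < Phi^4 := by
      rw [abs_lt]
      constructor
      · have : -Phi^4 < Phi^2 * lo := by nlinarith [Phi_sq_pos]
        linarith
      · have : Phi^2 * hi < Phi^4 := by nlinarith [Phi_sq_pos]
        linarith
    have h4 : 4 ≤ n := by
      by_contra hc
      push_neg at hc
      interval_cases n
      · rw [xi_one] at hxabs
        rw [abs_lt] at hxabs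
        nlinarith [Phi_sq, hxabs.1, Phi_pos, Phi_lt_one]
      · rw [xi_two] at hxabs
        rw [abs_lt] at hxabs
        nlinarith [Phi_sq, Phi_pos, Phi_lt_one, Phi_gt_615, Phi_lt_62]
      · rw [xi_three] at hxabs
        rw [abs_lt] at hxabs
        nlinarith [Phi_sq, Phi_pos, Phi_lt_one, Phi_gt_615, Phi_lt_62]
    set m : ℤ := round ((n:ℝ)*Phi) with hm
    have hmlt : (m:ℝ) < (n:ℝ) - 1/2 := by
      have h1 : (m:ℝ) ≤ (n:ℝ)*Phi + 1/2 := round_le_add_half _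
      have h2 : (4:ℝ) ≤ (n:ℝ) := by exact_mod_cast h4
      nlinarith [Phi_sq, Phi_gt_615, Phi_lt_62]
    have hmnn : 0 ≤ m := hrnn n
    have hmint : m < (n:ℤ) := by
      have : (m:ℝ) < (n:ℝ) := by linarith
      exact_mod_cast this
    set n0 : ℕ := n - m.toNat with hn0
    have hn0c : ((n0:ℕ):ℝ) = (n:ℝ) - (m:ℝ) := by
      have h1 : (m.toNat : ℤ) = m := Int.toNat_of_nonneg hmnn
      have h2 : m.toNat ≤ n := by omega
      push_cast [hn0, h2]
      rw [show ((m.toNat:ℕ):ℝ) = ((m.toNat:ℤ):ℝ) by push_cast; ring, h1]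
    have hxin : xi n = (n:ℝ)*Phi - m := rfl
    have key2 : ((n0:ℕ):ℝ) * Phi - ((2*m - n : ℤ) : ℝ) = (Phi + 2) * xi n := by
      rw [hn0c, hxin]; push_cast
      linear_combination (-(n:ℝ)) * Phi_sq
    have habs2 : |(Phi + 2) * xi n| < 1/2 := by
      rw [abs_mul, _root_.abs_of_nonneg (by linarith [Phi_pos] : (0:ℝ) ≤ Phi + 2)]
      have : (Phi + 2) * |xi n| < (Phi + 2) * Phi^4 :=
        mul_lt_mul_of_pos_left hxabs (by linarith [Phi_pos])
      have h2 : (Phi + 2) * Phi^4 = Phi^2 := by nlinarith [PhiTwoSq]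
      linarith [Phi_sq_lt_half]
    have hround2 : round (((n0:ℕ):ℝ) * Phi) = 2*m - n :=
      round_eq_of (by rw [key2]; exact habs2)
    have hxin0 : xi n0 = (Phi + 2) * xi n := by rw [xi, hround2, key2]
    have h2mn : 0 ≤ 2*m - n := by
      have := round_nonneg_of (mul_nonneg (Nat.cast_nonneg n0) Phi_pos.le)
      rw [hround2] at this; exact this
    refine ⟨n0, ⟨by omega, ?_, ?_⟩, ?_⟩
    · rw [hxin0]
      calc lo = (Phi + 2) * (Phi^2 * lo) := by linear_combination (-lo) * PhiTwoSq
        _ ≤ (Phi + 2) * xi n := mul_le_mul_of_nonneg_left hnlo (by linarith [Phi_pos])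
    · rw [hxin0]
      calc (Phi + 2) * xi n ≤ (Phi + 2) * (Phi^2 * hi) :=
            mul_le_mul_of_nonneg_left hnhi (by linarith [Phi_pos])
        _ = hi := by linear_combination hi * PhiTwoSq
    · -- f n0 = n
      have h1 : (m.toNat : ℤ) = m := Int.toNat_of_nonneg hmnn
      simp only [hf]
      rw [hround2]
      omega
  have hmono : ∀ a b : ℕ, a < b → f a < f b := by
    intro a b hab
    have h1 : round ((a:ℝ)*Phi) ≤ round ((b:ℝ)*Phi) := by
      apply round_mono'
      have : (a:ℝ) ≤ (b:ℝ) := by exact_mod_cast hab.le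
      nlinarith [Phi_pos]
    have h2 : (round ((a:ℝ)*Phi)).toNat ≤ (round ((b:ℝ)*Phi)).toNat := Int.toNat_le_toNat h1
    simp only [hf]
    omega
  have hS : (Jset lo hi).Nonempty := Jset_nonempty hlo0 hhi0 hne
  set N := sInf (Jset lo hi) with hNdef
  have hN : N ∈ Jset lo hi := Nat.sInf_mem hS
  obtain ⟨hfN, hfNxi⟩ := hfwd N hN
  have hS' : (Jset (Phi^2*lo) (Phi^2*hi)).Nonempty := ⟨f N, hfN⟩
  set N' := sInf (Jset (Phi^2*lo) (Phi^2*hi)) with hN'def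
  have hN' : N' ∈ Jset (Phi^2*lo) (Phi^2*hi) := Nat.sInf_mem hS'
  have hle : N' ≤ f N := Nat.sInf_le hfN
  obtain ⟨n0, hn0S, hfn0⟩ := hbwd N' hN'
  have hNle : N ≤ n0 := Nat.sInf_le hn0S
  have hge : f N ≤ N' := by
    rcases eq_or_lt_of_le hNle with h | h
    · rw [h, hfn0]
    · exact le_of_lt (by rw [← hfn0]; exact hmono _ _ h)
  have hNN : N' = f N := le_antisymm hle hge
  exact ⟨hS, hS', by rw [hNN, hfNxi]⟩

section Geom
variable {d : ℕ} {α : Fin d → ℝ}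

lemma sum_alpha_pos (hd : 1 ≤ d) (hpos : ∀ j, 0 < α j) : 0 < ∑ k, α k :=
  Finset.sum_pos (fun j _ => hpos j) ⟨⟨0, hd⟩, Finset.mem_univ _⟩

lemma beta_pos (hsum : ∑ k, α k < π) : 0 < beta α := by
  unfold beta; linarith

lemma beta_lt_half (hd : 1 ≤ d) (hpos : ∀ j, 0 < α j) : beta α < π/2 := by
  unfold beta; linarith [sum_alpha_pos hd hpos]

lemma sig_zero : sig α 0 = beta α := by
  unfold sig
  rw [Finset.filter_false_of_mem (fun k _ => by omega), Finset.sum_empty, add_zero]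

lemma sig_mono (hpos : ∀ j, 0 < α j) {i j : ℕ} (h : i ≤ j) : sig α i ≤ sig α j := by
  unfold sig
  have : Finset.univ.filter (fun k : Fin d => (k:ℕ) < i) ⊆
      Finset.univ.filter (fun k : Fin d => (k:ℕ) < j) := by
    intro k hk
    simp only [Finset.mem_filter] at *
    exact ⟨hk.1, by omega⟩
  linarith [Finset.sum_le_sum_of_subset_of_nonneg this (fun k _ _ => (hpos k).le)]

lemma sig_d : sig α d = π - beta α := by
  unfold sig
  rw [Finset.filter_true_of_mem (fun k _ => k.isLt), beta]
  ring

lemma sig_succ (j : Fin d) : sig α ((j:ℕ)+1) = sig α (j:ℕ) + α j := by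
  unfold sig
  have hins : Finset.univ.filter (fun k : Fin d => (k:ℕ) < (j:ℕ)+1) =
      insert j (Finset.univ.filter (fun k : Fin d => (k:ℕ) < (j:ℕ))) := by
    ext k
    simp only [Finset.mem_filter, Finset.mem_insert, Finset.mem_univ, true_and]
    constructor
    · intro hk
      rcases Nat.lt_succ_iff_lt_or_eq.mp hk with h | h
      · exact Or.inr h
      · exact Or.inl (Fin.ext h)
    · rintro (rfl | h)
      · omega
      · omega
  rw [hins, Finset.sum_insert (by simp)]
  ring

lemma arg_pos_of_im_pos {v : ℂ} (h : 0 < v.im) : 0 < v.arg := by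
  have hv : v ≠ 0 := fun hv => by simp [hv] at h
  have hsin : 0 < Real.sin v.arg := by
    rw [Complex.sin_arg]
    exact div_pos h (norm_pos_iff.mpr hv)
  by_contra hc
  push_neg at hc
  have := Real.sin_nonpos_of_nonpos_of_neg_pi_le hc (Complex.neg_pi_lt_arg v).le
  linarith

lemma arg_lt_pi_of_im_pos {v : ℂ} (h : 0 < v.im) : v.arg < π := by
  have hv : v ≠ 0 := fun hv => by simp [hv] at h
  have hsin : 0 < Real.sin v.arg := by
    rw [Complex.sin_arg]
    exact div_pos h (norm_pos_iff.mpr hv)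
  rcases lt_or_eq_of_le (Complex.arg_le_pi v) with h' | h'
  · exact h'
  · rw [h'] at hsin; simp at hsin

lemma arg_le_iff {v : ℂ} (him : 0 < v.im) {γ : ℝ} (h0 : 0 < γ) (hπ : γ < π) :
    v.arg ≤ γ ↔ v.im * Real.cos γ ≤ v.re * Real.sin γ := by
  have hv : v ≠ 0 := fun hv => by simp [hv] at him
  have habs : 0 < ‖v‖ := norm_pos_iff.mpr hv
  have hre : v.re = ‖v‖ * Real.cos v.arg := (Complex.norm_mul_cos_arg v).symm
  have him' : v.im = ‖v‖ * Real.sin v.arg := (Complex.norm_mul_sin_arg v).symm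
  have hθ0 : 0 < v.arg := arg_pos_of_im_pos him
  have hθπ : v.arg < π := arg_lt_pi_of_im_pos him
  have key : v.re * Real.sin γ - v.im * Real.cos γ = ‖v‖ * Real.sin (γ - v.arg) := by
    rw [hre, him', Real.sin_sub]; ring
  constructor
  · intro h
    have hs : 0 ≤ Real.sin (γ - v.arg) :=
      Real.sin_nonneg_of_nonneg_of_le_pi (by linarith) (by linarith)
    nlinarith
  · intro h
    by_contra hc
    push_neg at hc
    have hs : 0 < Real.sin (v.arg - γ) :=
      Real.sin_pos_of_pos_of_lt_pi (by linarith) (by linarith)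
    rw [show γ - v.arg = -(v.arg - γ) by ring, Real.sin_neg] at key
    nlinarith

lemma arg_lt_iff {v : ℂ} (him : 0 < v.im) {γ : ℝ} (h0 : 0 < γ) (hπ : γ < π) :
    v.arg < γ ↔ v.im * Real.cos γ < v.re * Real.sin γ := by
  have hv : v ≠ 0 := fun hv => by simp [hv] at him
  have habs : 0 < ‖v‖ := norm_pos_iff.mpr hv
  have hre : v.re = ‖v‖ * Real.cos v.arg := (Complex.norm_mul_cos_arg v).symm
  have him' : v.im = ‖v‖ * Real.sin v.arg := (Complex.norm_mul_sin_arg v).symm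
  have hθ0 : 0 < v.arg := arg_pos_of_im_pos him
  have hθπ : v.arg < π := arg_lt_pi_of_im_pos him
  have key : v.re * Real.sin γ - v.im * Real.cos γ = ‖v‖ * Real.sin (γ - v.arg) := by
    rw [hre, him', Real.sin_sub]; ring
  constructor
  · intro h
    have hs : 0 < Real.sin (γ - v.arg) :=
      Real.sin_pos_of_pos_of_lt_pi (by linarith) (by linarith)
    nlinarith
  · intro h
    by_contra hc
    push_neg at hc
    have hs : 0 ≤ Real.sin (v.arg - γ) :=
      Real.sin_nonneg_of_nonneg_of_le_pi (by linarith) (by linarith)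
    rw [show γ - v.arg = -(v.arg - γ) by ring, Real.sin_neg] at key
    nlinarith

end Geom

section Geom2
variable {d : ℕ} {α : Fin d → ℝ}

lemma Pc_sub (hpos : ∀ j, 0 < α j) {v : ℂ} (hv : v ∈ Pc α) :
    0 ≤ v.im ∧ beta α ≤ v.arg ∧ v.arg ≤ π - beta α := by
  obtain ⟨S, ⟨j, rfl⟩, hj⟩ := hv
  obtain ⟨him, hlow, hup⟩ := hj
  refine ⟨him, ?_, ?_⟩
  · rw [← sig_zero (α := α)]
    rcases Nat.eq_zero_or_pos (j:ℕ) with h0 | h0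
    · rw [if_pos h0] at hlow
      exact hlow
    · rw [if_neg (by omega)] at hlow
      calc sig α 0 ≤ sig α (j:ℕ) := sig_mono hpos (by omega)
        _ ≤ v.arg := hlow.le
  · calc v.arg ≤ sig α ((j:ℕ)+1) := hup
      _ ≤ sig α d := sig_mono hpos (by omega)
      _ = π - beta α := sig_d

lemma find_j (hpos : ∀ j, 0 < α j) (hd : 1 ≤ d) {x : ℝ}
    (h0 : sig α 0 ≤ x) (hD : x ≤ sig α d) :
    ∃ j : Fin d, (if (j:ℕ) = 0 then sig α 0 ≤ x else sig α (j:ℕ) < x) ∧ x ≤ sig α ((j:ℕ)+1) := by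
  have aux : ∀ m : ℕ, 1 ≤ m → m ≤ d → x ≤ sig α m →
      ∃ j : Fin d, (if (j:ℕ) = 0 then sig α 0 ≤ x else sig α (j:ℕ) < x) ∧
        x ≤ sig α ((j:ℕ)+1) := by
    intro m hm
    induction m, hm using Nat.le_induction with
    | base =>
      intro _ hx
      exact ⟨⟨0, hd⟩, by simpa using h0, by simpa using hx⟩
    | succ m hm ih =>
      intro hmd hx
      by_cases hc : x ≤ sig α m
      · exact ih (by omega) hc
      · push_neg at hc
        refine ⟨⟨m, by omega⟩, ?_, ?_⟩
        · rw [if_neg (by simp; omega)]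
          simpa using hc
        · simpa using hx
  exact aux d hd le_rfl hD

lemma mem_Pc_iff (hpos : ∀ j, 0 < α j) (hd : 1 ≤ d) {v : ℂ} (hv : 0 < v.im) :
    v ∈ Pc α ↔ (beta α ≤ v.arg ∧ v.arg ≤ π - beta α) := by
  constructor
  · intro h; exact (Pc_sub hpos h).2
  · rintro ⟨h1, h2⟩
    obtain ⟨j, hj1, hj2⟩ := find_j (x := v.arg) hpos hd (by rw [sig_zero]; exact h1)
      (by rw [sig_d]; exact h2)
    exact mem_iUnion.mpr ⟨j, ⟨hv.le, hj1, hj2⟩⟩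

lemma Pmid_unique (hpos : ∀ j, 0 < α j) {v : ℂ} {i j : Fin d}
    (hi : v ∈ Pmid α i) (hj : v ∈ Pmid α j) : i = j := by
  have key : ∀ {a b : Fin d}, v ∈ Pmid α a → v ∈ Pmid α b → (a:ℕ) < (b:ℕ) → False := by
    intro a b ha hb hab
    have hup : v.arg ≤ sig α ((a:ℕ)+1) := ha.2.2
    have hlow : sig α (b:ℕ) < v.arg := by
      have := hb.2.1
      rwa [if_neg (by omega)] at this
    have : sig α ((a:ℕ)+1) ≤ sig α (b:ℕ) := sig_mono hpos (by omega)
    linarith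
  rcases lt_trichotomy ((i:ℕ)) ((j:ℕ)) with h | h | h
  · exact absurd (key hi hj h) (by simp)
  · exact Fin.ext h
  · exact absurd (key hj hi h) (by simp)

lemma Emap_eq_of_mem {τ : Equiv.Perm (Fin d)} (hpos : ∀ j, 0 < α j) {z : ℂ} {j : Fin d}
    (hj : z ∈ Pmid α j) :
    Emap α τ z = z * Complex.exp ((theta α τ j : ℝ) * Complex.I) := by
  have hex : ∃ i, z ∈ Pmid α i := ⟨j, hj⟩
  rw [Emap, dif_pos hex]
  have hch : hex.choose = j := Pmid_unique hpos hex.choose_spec hj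
  rw [hch]

lemma Emap_eq_self_of_not_mem {τ : Equiv.Perm (Fin d)} {z : ℂ} (h : z ∉ Pc α) :
    Emap α τ z = z := by
  rw [Emap, dif_neg]
  rintro ⟨j, hj⟩
  exact h (mem_iUnion.mpr ⟨j, hj⟩)

lemma theta_abs_lt (hpos : ∀ j, 0 < α j) (hsum : ∑ k, α k < π) (τ : Equiv.Perm (Fin d))
    (j : Fin d) : |theta α τ j| < π := by
  have hA : 0 ≤ ∑ k ∈ Finset.univ.filter (fun k : Fin d => k < j), α k :=
    Finset.sum_nonneg fun k _ => (hpos k).le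
  have hB : 0 ≤ ∑ k ∈ Finset.univ.filter (fun k : Fin d => τ k < τ j), α k :=
    Finset.sum_nonneg fun k _ => (hpos k).le
  have hA2 : ∑ k ∈ Finset.univ.filter (fun k : Fin d => k < j), α k ≤ ∑ k, α k :=
    Finset.sum_le_sum_of_subset_of_nonneg (Finset.filter_subset _ _) fun k _ _ => (hpos k).le
  have hB2 : ∑ k ∈ Finset.univ.filter (fun k : Fin d => τ k < τ j), α k ≤ ∑ k, α k :=
    Finset.sum_le_sum_of_subset_of_nonneg (Finset.filter_subset _ _) fun k _ _ => (hpos k).le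
  rw [theta, abs_lt]
  constructor <;> linarith

/-- The exchanged point: arg bounds. -/
lemma Emap_props (hpos : ∀ j, 0 < α j) (hsum : ∑ k, α k < π) (hd : 1 ≤ d)
    (τ : Equiv.Perm (Fin d)) {z : ℂ} (hv : 0 < z.im) {j : Fin d} (hj : z ∈ Pmid α j) :
    Emap α τ z ∈ Pc α ∧ 0 < (Emap α τ z).im ∧
      ‖Emap α τ z‖ = ‖z‖ := by
  have hz0 : z ≠ 0 := fun h => by simp [h] at hv
  set θ : ℝ := theta α τ j with hθ
  have hE : Emap α τ z = z * Complex.exp ((θ:ℝ) * Complex.I) := Emap_eq_of_mem hpos hj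
  set A : ℝ := ∑ k ∈ Finset.univ.filter (fun k : Fin d => k < j), α k with hA
  set B : ℝ := ∑ k ∈ Finset.univ.filter (fun k : Fin d => τ k < τ j), α k with hB
  have hθAB : θ = B - A := rfl
  have hA0 : 0 ≤ A := Finset.sum_nonneg fun k _ => (hpos k).le
  have hB0 : 0 ≤ B := Finset.sum_nonneg fun k _ => (hpos k).le
  have hBj : B + α j ≤ ∑ k, α k := by
    have hsub : insert j (Finset.univ.filter (fun k : Fin d => τ k < τ j)) ⊆ Finset.univ := by
      intro k _; exact Finset.mem_univ k
    have hnotin : j ∉ Finset.univ.filter (fun k : Fin d => τ k < τ j) := by simp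
    have := Finset.sum_le_sum_of_subset_of_nonneg hsub (fun k _ _ => (hpos k).le)
    rw [Finset.sum_insert hnotin] at this
    linarith
  have hsigA : sig α (j:ℕ) = beta α + A := rfl
  -- bounds on arg z
  have hargl : beta α + A ≤ z.arg := by
    rcases Nat.eq_zero_or_pos (j:ℕ) with h0 | h0
    · have := hj.2.1
      rw [if_pos h0] at this
      rw [sig_zero] at this
      have hA00 : A = 0 := by
        rw [hA]
        apply Finset.sum_eq_zero
        intro k hk
        simp only [Finset.mem_filter, Finset.mem_univ, true_and] at hk
        exact absurd (Fin.lt_def.mp hk) (by omega)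
      rw [hA00, add_zero]; exact this
    · have := hj.2.1
      rw [if_neg (by omega)] at this
      rw [hsigA] at this
      exact this.le
  have hargu : z.arg ≤ beta α + A + α j := by
    have := hj.2.2
    rwa [sig_succ, hsigA] at this
  have hβ0 : 0 < beta α := beta_pos hsum
  have hβπ : beta α < π/2 := beta_lt_half hd hpos
  have hsd : beta α + (∑ k, α k) = π - beta α := by rw [beta]; ring
  -- arg of exp
  have hθIoc : θ ∈ Set.Ioc (-π) π := by
    have := theta_abs_lt hpos hsum τ j
    rw [abs_lt] at this
    exact ⟨this.1, this.2.le⟩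
  have hargexp : (Complex.exp ((θ:ℝ) * Complex.I)).arg = θ := by
    rw [Complex.exp_mul_I]
    exact_mod_cast Complex.arg_cos_add_sin_mul_I hθIoc
  have hexp0 : Complex.exp ((θ:ℝ) * Complex.I) ≠ 0 := Complex.exp_ne_zero _
  have hsum_mem : z.arg + (Complex.exp ((θ:ℝ) * Complex.I)).arg ∈ Set.Ioc (-π) π := by
    rw [hargexp]
    constructor
    · have : beta α + B ≤ z.arg + θ := by rw [hθAB]; linarith
      nlinarith [Real.pi_pos]
    · have : z.arg + θ ≤ beta α + B + α j := by rw [hθAB]; linarith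
      linarith
  have hargE : (Emap α τ z).arg = z.arg + θ := by
    rw [hE, Complex.arg_mul hz0 hexp0 hsum_mem, hargexp]
  have hlow : beta α ≤ (Emap α τ z).arg := by
    rw [hargE, hθAB]; linarith
  have hup : (Emap α τ z).arg ≤ π - beta α := by
    rw [hargE, hθAB]; linarith
  have habsE : ‖Emap α τ z‖ = ‖z‖ := by
    rw [hE, norm_mul, Complex.norm_exp_ofReal_mul_I, mul_one]
  have hE0 : Emap α τ z ≠ 0 := by
    rw [hE]
    exact mul_ne_zero hz0 hexp0
  have himE : 0 < (Emap α τ z).im := by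
    have h1 : (Emap α τ z).im = ‖Emap α τ z‖ * Real.sin (Emap α τ z).arg :=
      (Complex.norm_mul_sin_arg _).symm
    rw [h1]
    apply mul_pos (norm_pos_iff.mpr hE0)
    apply Real.sin_pos_of_pos_of_lt_pi <;> nlinarith
  exact ⟨(mem_Pc_iff hpos hd himE).mpr ⟨hlow, hup⟩, himE, habsE⟩

lemma sin_ge_sin_beta (hd : 1 ≤ d) (hpos : ∀ j, 0 < α j) (hsum : ∑ k, α k < π) {x : ℝ}
    (h1 : beta α ≤ x) (h2 : x ≤ π - beta α) : Real.sin (beta α) ≤ Real.sin x := by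
  have hβ0 : 0 < beta α := beta_pos hsum
  have hβπ : beta α < π/2 := beta_lt_half hd hpos
  by_cases hc : x ≤ π/2
  · exact Real.sin_le_sin_of_le_of_le_pi_div_two (by linarith) hc h1
  · push_neg at hc
    rw [show Real.sin x = Real.sin (π - x) from (Real.sin_pi_sub x).symm]
    exact Real.sin_le_sin_of_le_of_le_pi_div_two (by linarith [Real.pi_pos]) (by linarith)
      (by linarith)

end Geom2

section Dyn
variable {d : ℕ} {α : Fin d → ℝ} {τ : Equiv.Perm (Fin d)} {lam eta : ℝ}

lemma Pc_im_pos (hpos : ∀ j, 0 < α j) (hsum : ∑ k, α k < π) {z : ℂ} (hz : z ∈ Pc α) :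
    0 < z.im := by
  obtain ⟨him, hl, hu⟩ := Pc_sub hpos hz
  have hβ0 : 0 < beta α := beta_pos hsum
  have hz0 : z ≠ 0 := by
    intro h
    rw [h, Complex.arg_zero] at hl
    linarith
  have h1 : z.im = ‖z‖ * Real.sin z.arg := (Complex.norm_mul_sin_arg _).symm
  rw [h1]
  apply mul_pos (norm_pos_iff.mpr hz0)
  apply Real.sin_pos_of_pos_of_lt_pi
  · linarith
  · linarith

lemma Fmap_P0 (hpos : ∀ j, 0 < α j) {v : ℂ} (h : v ∈ P0 α) :
    Fmap α τ lam eta v = v - 1 := by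
  have hnot : v ∉ Pc α := by
    intro hc
    exact absurd h.2.2 (not_lt.mpr (Pc_sub hpos hc).2.1)
  rw [Fmap, Emap_eq_self_of_not_mem hnot, Gmap, if_pos h]

lemma Fmap_Pend (hpos : ∀ j, 0 < α j) (hsum : ∑ k, α k < π) (hd : 1 ≤ d)
    {v : ℂ} (h : v ∈ Pend α) : Fmap α τ lam eta v = v + lam := by
  have hβ0 : 0 < beta α := beta_pos hsum
  have hβπ : beta α < π/2 := beta_lt_half hd hpos
  have harg : π - beta α < v.arg := h.2.1
  have hnot : v ∉ Pc α := fun hc => absurd (Pc_sub hpos hc).2.2 (not_le.mpr harg)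
  have hnot0 : v ∉ P0 α := by
    intro hc
    have := hc.2.2
    linarith
  rw [Fmap, Emap_eq_self_of_not_mem hnot, Gmap, if_neg hnot0, if_pos h]

lemma Fmap_first (hpos : ∀ j, 0 < α j) (hsum : ∑ k, α k < π) (hd : 1 ≤ d)
    {z : ℂ} (hz : z ∈ Pc α) : Fmap α τ lam eta z = Emap α τ z - eta := by
  have hzim : 0 < z.im := Pc_im_pos hpos hsum hz
  obtain ⟨j, hj⟩ := mem_iUnion.mp hz
  obtain ⟨hwPc, hwim, _⟩ := Emap_props hpos hsum hd τ hzim hj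
  have hwarg := (Pc_sub hpos hwPc).2
  have hβ0 : 0 < beta α := beta_pos hsum
  have hnot0 : Emap α τ z ∉ P0 α := fun hc => absurd hc.2.2 (not_lt.mpr hwarg.1)
  have hnotE : Emap α τ z ∉ Pend α := fun hc => absurd hc.2.1 (not_lt.mpr hwarg.2)
  rw [Fmap, Gmap, if_neg hnot0, if_neg hnotE, if_pos hwPc]

end Dyn

section Master
variable {d : ℕ} {α : Fin d → ℝ} {τ : Equiv.Perm (Fin d)} {lam eta : ℝ}

lemma master (hd : 1 ≤ d) (hpos : ∀ j, 0 < α j) (hsum : ∑ k, α k < π)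
    {k0 : ℕ} (hk0 : 1 ≤ k0) (hlam_pos : 0 < lam) (hlamk : lam * ((k0:ℝ) + Phi) = 1)
    (heta : eta = Phi * lam)
    {z : ℂ} (hz : z ∈ Pc α) {δ lo hi : ℝ}
    (hδ : δ = (Emap α τ z).im * Real.cos (beta α) / Real.sin (beta α))
    (hlo : lo = ((Emap α τ z).re - δ)/lam) (hhi : hi = ((Emap α τ z).re + δ)/lam)
    (hsmall : 2*δ < Phi^2 * lam) :
    (hitSet α τ lam eta z).Nonempty ∧
    lo ≤ 0 ∧ 0 ≤ hi ∧ -Phi^2 < lo ∧ hi < Phi^2 ∧ (lo < 0 ∨ 0 < hi) ∧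
    Rmap α τ lam eta z
      = Emap α τ z - ((lam * xi (sInf (Jset lo hi)) : ℝ) : ℂ) := by
  have hzim : 0 < z.im := Pc_im_pos hpos hsum hz
  obtain ⟨j, hj⟩ := mem_iUnion.mp hz
  obtain ⟨hwPc, hwim, hwabs⟩ := Emap_props hpos hsum hd τ hzim hj
  set w := Emap α τ z with hw
  set a : ℝ := w.re with ha
  set y : ℝ := w.im with hy
  set c : ℝ := Real.cos (beta α) with hcc
  set s : ℝ := Real.sin (beta α) with hss
  have hβ0 : 0 < beta α := beta_pos hsum
  have hβπ : beta α < π/2 := beta_lt_half hd hpos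
  have hπ : 0 < π := Real.pi_pos
  have hs : 0 < s := Real.sin_pos_of_pos_of_lt_pi hβ0 (by linarith)
  have hc : 0 < c := Real.cos_pos_of_mem_Ioo ⟨by linarith, hβπ⟩
  have hδs : δ * s = y * c := by rw [hδ]; field_simp
  have hδpos : 0 < δ := by rw [hδ]; positivity
  -- |a| ≤ δ from w ∈ Pc
  have hwargs := (Pc_sub hpos hwPc).2
  have haδ : a ≤ δ := by
    have h1 : ¬ (w.arg < beta α) := not_lt.mpr hwargs.1
    rw [arg_lt_iff hwim hβ0 (by linarith)] at h1
    push_neg at h1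
    nlinarith
  have haδ' : -δ ≤ a := by
    have h1 : w.arg ≤ π - beta α := hwargs.2
    rw [arg_le_iff hwim (by linarith) (by linarith)] at h1
    rw [Real.cos_pi_sub, Real.sin_pi_sub] at h1
    nlinarith
  -- J bounds
  have hlo0 : lo ≤ 0 := by rw [hlo]; apply div_nonpos_of_nonpos_of_nonneg <;> linarith
  have hhi0 : 0 ≤ hi := by
    rw [hhi]
    apply div_nonneg _ hlam_pos.le
    linarith
  have hloP : -Phi^2 < lo := by
    rw [hlo, lt_div_iff₀ hlam_pos]
    nlinarith
  have hhiP : hi < Phi^2 := by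
    rw [hhi, div_lt_iff₀ hlam_pos]
    nlinarith
  have hlohi : lo < hi := by
    rw [hlo, hhi, div_lt_div_iff₀ hlam_pos hlam_pos]
    nlinarith
  have hor : lo < 0 ∨ 0 < hi := by
    rcases lt_or_ge 0 hi with h | h
    · exact Or.inr h
    · left
      have : hi = 0 := le_antisymm h hhi0
      linarith [hlohi]
  -- membership bridges
  have him_p : ∀ x : ℝ, (w - ((lam * x : ℝ) : ℂ)).im = y := by intro x; simp [hy]
  have hre_p : ∀ x : ℝ, (w - ((lam * x : ℝ) : ℂ)).re = a - lam * x := by intro x; simp [ha]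
  have himy : ∀ x : ℝ, 0 < (w - ((lam * x : ℝ) : ℂ)).im := by
    intro x; rw [him_p]; exact hwim
  have hPc_iff : ∀ x : ℝ, (w - ((lam * x : ℝ) : ℂ) ∈ Pc α) ↔ (lo ≤ x ∧ x ≤ hi) := by
    intro x
    rw [mem_Pc_iff hpos hd (himy x)]
    have h1 : beta α ≤ (w - ((lam * x : ℝ) : ℂ)).arg ↔ lo ≤ x := by
      rw [← not_lt, arg_lt_iff (himy x) hβ0 (by linarith), him_p, hre_p, not_lt, hlo,
        div_le_iff₀ hlam_pos]
      constructor <;> intro h <;> nlinarith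
    have h2 : (w - ((lam * x : ℝ) : ℂ)).arg ≤ π - beta α ↔ x ≤ hi := by
      rw [arg_le_iff (himy x) (by linarith) (by linarith), him_p, hre_p, Real.cos_pi_sub,
        Real.sin_pi_sub, hhi, le_div_iff₀ hlam_pos]
      constructor <;> intro h <;> nlinarith
    rw [h1, h2]
  have hP0_iff : ∀ x : ℝ, (w - ((lam * x : ℝ) : ℂ) ∈ P0 α) ↔ x < lo := by
    intro x
    constructor
    · intro h
      have h2 := h.2.2
      rw [arg_lt_iff (himy x) hβ0 (by linarith), him_p, hre_p] at h2
      rw [hlo, lt_div_iff₀ hlam_pos]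
      nlinarith
    · intro h
      rw [hlo, lt_div_iff₀ hlam_pos] at h
      refine ⟨(himy x).le, (arg_pos_of_im_pos (himy x)).le, ?_⟩
      rw [arg_lt_iff (himy x) hβ0 (by linarith), him_p, hre_p]
      nlinarith
  have hPend_iff : ∀ x : ℝ, (w - ((lam * x : ℝ) : ℂ) ∈ Pend α) ↔ hi < x := by
    intro x
    constructor
    · intro h
      have h2 := h.2.1
      rw [← not_le, arg_le_iff (himy x) (by linarith) (by linarith), him_p, hre_p,
        Real.cos_pi_sub, Real.sin_pi_sub, not_le] at h2
      rw [hhi, div_lt_iff₀ hlam_pos]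
      nlinarith
    · intro h
      rw [hhi, div_lt_iff₀ hlam_pos] at h
      refine ⟨(himy x).le, ?_, Complex.arg_le_pi _⟩
      rw [← not_le, arg_le_iff (himy x) (by linarith) (by linarith), him_p, hre_p,
        Real.cos_pi_sub, Real.sin_pi_sub, not_le]
      nlinarith
  -- step lemmas in offset coordinates
  have hstep_p0 : ∀ x : ℝ, x < lo →
      Fmap α τ lam eta (w - ((lam * x : ℝ) : ℂ))
        = w - ((lam * (x + ((k0:ℝ) + Phi)) : ℝ) : ℂ) := by
    intro x hx
    rw [Fmap_P0 hpos ((hP0_iff x).mpr hx)]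
    have hxx : lam * (x + ((k0:ℝ) + Phi)) = lam * x + 1 := by
      have : lam * ((k0:ℝ) + Phi) = 1 := hlamk
      nlinarith
    rw [hxx]
    push_cast
    ring
  have hstep_pend : ∀ x : ℝ, hi < x →
      Fmap α τ lam eta (w - ((lam * x : ℝ) : ℂ))
        = w - ((lam * (x - 1) : ℝ) : ℂ) := by
    intro x hx
    rw [Fmap_Pend hpos hsum hd ((hPend_iff x).mpr hx)]
    have hxx : lam * (x - 1) = lam * x - lam := by ring
    rw [hxx]
    push_cast
    ring
  -- the orbit lemma
  have ORB : ∀ n : ℕ, (∀ m : ℕ, 1 ≤ m → m ≤ n → (xi m < lo ∨ hi < xi m)) →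
      ∃ T : ℕ, 1 ≤ T ∧
        (Fmap α τ lam eta)^[T] z = w - ((lam * Int.fract (((n+1 : ℕ) : ℝ) * Phi) : ℝ) : ℂ) ∧
        ∀ i, 1 ≤ i → i < T → (Fmap α τ lam eta)^[i] z ∉ Pc α := by
    intro n
    induction n with
    | zero =>
      intro _
      refine ⟨1, le_rfl, ?_, fun i h1 h2 => absurd (lt_of_le_of_lt h1 h2) (by omega)⟩
      rw [Function.iterate_one, Fmap_first hpos hsum hd hz, ← hw]
      have hfr : Int.fract (((0+1 : ℕ) : ℝ) * Phi) = Phi := by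
        push_cast
        rw [one_mul, Int.fract_eq_self.mpr ⟨Phi_pos.le, Phi_lt_one⟩]
      rw [hfr, heta]
      push_cast
      ring_nf
    | succ n ih =>
      intro hnh
      obtain ⟨T, hT1, hTeq, hTnot⟩ := ih (fun m h1 h2 => hnh m h1 (by omega))
      set g : ℝ := Int.fract (((n+1 : ℕ) : ℝ) * Phi) with hg
      set g' : ℝ := Int.fract (((n+1+1 : ℕ) : ℝ) * Phi) with hg'
      have hg0 : 0 < g := fract_nPhi_pos (by omega)
      have hg_1 : g < 1 := fract_nPhi_lt_one _
      have hg'0 : 0 < g' := fract_nPhi_pos (by omega)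
      have hg'1 : g' < 1 := fract_nPhi_lt_one _
      have hgrel : g' = Int.fract (g + Phi) := by
        have h1 : ((n+1+1 : ℕ) : ℝ) * Phi
            = ((⌊((n+1 : ℕ) : ℝ) * Phi⌋ : ℤ) : ℝ) + (g + Phi) := by
          rw [hg, Int.fract]
          push_cast
          ring
        rw [hg', h1, Int.fract_intCast_add]
      have hxin1 := hnh (n+1) (by omega) le_rfl
      have hno_pos : ¬(lo ≤ g ∧ g ≤ hi) := by
        rintro ⟨h1, h2⟩
        have hfr : Int.fract (((n+1 : ℕ) : ℝ) * Phi) < 1/2 := by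
          rw [← hg]
          linarith [Phi_sq_lt_half]
        have hx : xi (n+1) = g := by rw [xi_eq_fract_of hfr]
        rcases hxin1 with h | h <;> linarith [hx ▸ h]
      have hno_neg : ¬(lo ≤ g - 1 ∧ g - 1 ≤ hi) := by
        rintro ⟨h1, h2⟩
        have hfr : 1/2 < Int.fract (((n+1 : ℕ) : ℝ) * Phi) := by
          rw [← hg]
          have : -Phi^2 > -(1/2) := by linarith [Phi_sq_lt_half]
          linarith
        have hx : xi (n+1) = g - 1 := by rw [xi_eq_fract_sub_one_of hfr]
        rcases hxin1 with h | h <;> linarith [hx ▸ h]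
      have hgPend : hi < g := by
        rcases not_and_or.mp hno_pos with h | h
        · push_neg at h
          linarith
        · exact not_le.mp h
      have hT2eq : (Fmap α τ lam eta)^[T+1] z = w - ((lam * (g - 1) : ℝ) : ℂ) := by
        rw [Function.iterate_succ_apply', hTeq, hstep_pend g hgPend]
      have hgP0 : g - 1 < lo := by
        rcases not_and_or.mp hno_neg with h | h
        · exact not_le.mp h
        · push_neg at h
          linarith
      have hT3eq : (Fmap α τ lam eta)^[T+2] z
          = w - ((lam * (g - 1 + ((k0:ℝ) + Phi)) : ℝ) : ℂ) := by
        rw [show T+2 = (T+1)+1 by omega, Function.iterate_succ_apply', hT2eq,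
          hstep_p0 _ hgP0]
      set M : ℕ := if g + Phi < 1 then k0 - 1 else k0 with hM
      have hMg : g - 1 + ((k0:ℝ) + Phi) = g' + (M:ℝ) := by
        by_cases hcase : g + Phi < 1
        · have hgg : g' = g + Phi := by
            rw [hgrel, Int.fract_eq_self.mpr ⟨by linarith [Phi_pos], hcase⟩]
          have hMk : (M:ℝ) = (k0:ℝ) - 1 := by
            rw [hM, if_pos hcase]
            push_cast [Nat.cast_sub hk0]
            ring
          rw [hgg, hMk]
          ring
        · push_neg at hcase
          have hgg : g' = g + Phi - 1 := by
            rw [hgrel]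
            have h1 : g + Phi = g + Phi - 1 + ((1:ℤ):ℝ) := by push_cast; ring
            rw [h1, Int.fract_add_intCast,
              Int.fract_eq_self.mpr ⟨by linarith, by linarith [Phi_lt_one]⟩]
            push_cast
            ring
          have hMk : (M:ℝ) = (k0:ℝ) := by rw [hM, if_neg (not_lt.mpr hcase)]
          rw [hgg, hMk]
          ring
      have hsub : ∀ i : ℕ, i ≤ M → (Fmap α τ lam eta)^[T+2+i] z
          = w - ((lam * (g' + ((M - i : ℕ) : ℝ)) : ℝ) : ℂ) := by
        intro i
        induction i with
        | zero =>
          intro _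
          have hxx : lam * (g' + ((M - 0 : ℕ) : ℝ)) = lam * (g - 1 + ((k0:ℝ) + Phi)) := by
            rw [Nat.sub_zero]
            linear_combination lam * hMg.symm
          rw [show T+2+0 = T+2 from rfl, hT3eq, ← hxx]
        | succ i ihi =>
          intro hiM
          have hlt : hi < g' + ((M - i : ℕ) : ℝ) := by
            have h1 : (1:ℝ) ≤ ((M - i : ℕ) : ℝ) := by
              have : 1 ≤ M - i := by omega
              exact_mod_cast this
            linarith [hhiP, Phi_sq_lt_half, hg'0]
          have hprev := ihi (by omega)
          rw [show T+2+(i+1) = (T+2+i)+1 by omega, Function.iterate_succ_apply', hprev,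
            hstep_pend _ hlt]
          have hxx : lam * (g' + ((M - i : ℕ) : ℝ) - 1)
              = lam * (g' + ((M - (i+1) : ℕ) : ℝ)) := by
            have h2 : ((M - i : ℕ) : ℝ) = ((M - (i+1) : ℕ) : ℝ) + 1 := by
              have h3 : M - i = (M - (i+1)) + 1 := by omega
              rw [h3]
              push_cast
              ring
            rw [h2]
            ring
          rw [hxx]
      refine ⟨T+2+M, by omega, ?_, ?_⟩
      · have hfin := hsub M le_rfl
        rw [Nat.sub_self] at hfin
        have hxx : lam * (g' + ((0:ℕ):ℝ)) = lam * g' := by push_cast; ring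
        rw [hfin, hxx]
      · intro i hi1 hiT
        by_cases h1 : i < T
        · exact hTnot i hi1 h1
        by_cases h2 : i = T
        · rw [h2, hTeq]
          intro hmem
          exact hno_pos ((hPc_iff g).mp hmem)
        by_cases h3 : i = T+1
        · rw [h3, hT2eq]
          intro hmem
          exact hno_neg ((hPc_iff (g-1)).mp hmem)
        · obtain ⟨i', hi'M, rfl⟩ : ∃ i', i' < M ∧ i = T+2+i' :=
            ⟨i - (T+2), by omega, by omega⟩
          rw [hsub i' hi'M.le]
          intro hmem
          have hcc2 := ((hPc_iff _).mp hmem).2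
          have h1 : (1:ℝ) ≤ ((M - i' : ℕ) : ℝ) := by
            have : 1 ≤ M - i' := by omega
            exact_mod_cast this
          linarith [hhiP, Phi_sq_lt_half, hg'0]
  -- final assembly
  have hSne : (Jset lo hi).Nonempty := Jset_nonempty hlo0 hhi0 hor
  set N := sInf (Jset lo hi) with hN
  have hNmem : N ∈ Jset lo hi := Nat.sInf_mem hSne
  obtain ⟨hN1, hNlo, hNhi⟩ := hNmem
  have hmin : ∀ m : ℕ, 1 ≤ m → m ≤ N - 1 → (xi m < lo ∨ hi < xi m) := by
    intro m h1 h2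
    have hnm : m ∉ Jset lo hi := Nat.notMem_of_lt_sInf (by omega)
    by_contra hcon
    push_neg at hcon
    exact hnm ⟨h1, hcon.1, hcon.2⟩
  obtain ⟨T, hT1, hTeq, hTnot⟩ := ORB (N-1) hmin
  have hNc : (N-1)+1 = N := by omega
  rw [hNc] at hTeq
  set gN : ℝ := Int.fract ((N : ℝ) * Phi) with hgN
  have hgN0 : 0 < gN := fract_nPhi_pos hN1
  have hgN1 : gN < 1 := fract_nPhi_lt_one _
  rcases le_or_gt 0 (xi N) with hsign | hsign
  · -- positive side hit at time T
    have hxiN : xi N = gN := by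
      rcases xi_cases N with h | h
      · rw [h, hgN]
      · rw [h, ← hgN] at hsign
        linarith
    have hhitT : T ∈ hitSet α τ lam eta z :=
      ⟨by omega, by rw [hTeq]; exact (hPc_iff gN).mpr ⟨hxiN ▸ hNlo, hxiN ▸ hNhi⟩⟩
    have hneS : (hitSet α τ lam eta z).Nonempty := ⟨T, hhitT⟩
    have htime : hitTime α τ lam eta z = T := by
      rw [hitTime]
      refine le_antisymm (Nat.sInf_le hhitT) ?_
      by_contra hcon
      push_neg at hcon
      have hmem := Nat.sInf_mem hneS
      exact hTnot _ hmem.1 hcon hmem.2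
    refine ⟨hneS, hlo0, hhi0, hloP, hhiP, hor, ?_⟩
    rw [Rmap, htime, hTeq, hxiN]
  · -- negative side hit at time T+1
    have hxiN : xi N = gN - 1 := by
      rcases xi_cases N with h | h
      · rw [h, ← hgN] at hsign
        linarith
      · rw [h, hgN]
    have hgNbig : 1/2 < gN := by
      have : -Phi^2 ≤ xi N := le_of_lt (lt_of_lt_of_le hloP hNlo)
      rw [hxiN] at this
      linarith [Phi_sq_lt_half]
    have hnothitT : ¬(lo ≤ gN ∧ gN ≤ hi) := by
      rintro ⟨h1, h2⟩
      linarith [Phi_sq_lt_half, hhiP]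
    have hgNPend : hi < gN := by linarith [Phi_sq_lt_half, hhiP]
    have hT2eq : (Fmap α τ lam eta)^[T+1] z = w - ((lam * (gN - 1) : ℝ) : ℂ) := by
      rw [Function.iterate_succ_apply', hTeq, hstep_pend gN hgNPend]
    have hhitT : T+1 ∈ hitSet α τ lam eta z :=
      ⟨by omega, by rw [hT2eq]; exact (hPc_iff (gN-1)).mpr ⟨hxiN ▸ hNlo, hxiN ▸ hNhi⟩⟩
    have hneS : (hitSet α τ lam eta z).Nonempty := ⟨T+1, hhitT⟩
    have htime : hitTime α τ lam eta z = T+1 := by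
      rw [hitTime]
      refine le_antisymm (Nat.sInf_le hhitT) ?_
      by_contra hcon
      push_neg at hcon
      have hmem := Nat.sInf_mem hneS
      rcases Nat.lt_succ_iff_lt_or_eq.mp hcon with h | h
      · exact hTnot _ hmem.1 h hmem.2
      · have hmem2 : (Fmap α τ lam eta)^[T] z ∈ Pc α := h ▸ hmem.2
        rw [hTeq] at hmem2
        exact hnothitT ((hPc_iff gN).mp hmem2)
    refine ⟨hneS, hlo0, hhi0, hloP, hhiP, hor, ?_⟩
    rw [Rmap, htime, hT2eq, hxiN]

end Master

/-- **Theorem A (renormalization of translated cone exchanges).**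
For λ = 1/(k+Φ) and η = 1 − kλ (k ≥ 1 an integer), every admissible α and every
permutation τ, the first return map R of F to the middle cone P_c satisfies
R(Φ²z) = Φ²·R(z) for all z ∈ P_c sufficiently close to the real axis, the return
times being finite. -/
theorem renormalization_of_TCE
    (d : ℕ) (hd : 1 ≤ d) (α : Fin d → ℝ) (hpos : ∀ j, 0 < α j) (hsum : ∑ k, α k < π)
    (τ : Equiv.Perm (Fin d)) (k : ℕ) (hk : 1 ≤ k) (lam eta : ℝ)
    (hlam : lam = 1 / (k + Phi)) (heta : eta = 1 - k * lam) :
    ∃ ystar : ℝ, 0 < ystar ∧ ∀ z ∈ Pc α, z.im < ystar →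
      (hitSet α τ lam eta z).Nonempty ∧
      (hitSet α τ lam eta (((Phi ^ 2 : ℝ) : ℂ) * z)).Nonempty ∧
      Rmap α τ lam eta (((Phi ^ 2 : ℝ) : ℂ) * z) = ((Phi ^ 2 : ℝ) : ℂ) * Rmap α τ lam eta z := by
  have hβ0 : 0 < beta α := beta_pos hsum
  have hβπ : beta α < π/2 := beta_lt_half hd hpos
  have hπ : 0 < π := Real.pi_pos
  set c : ℝ := Real.cos (beta α) with hcc
  set s : ℝ := Real.sin (beta α) with hss
  have hs : 0 < s := Real.sin_pos_of_pos_of_lt_pi hβ0 (by linarith)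
  have hc : 0 < c := Real.cos_pos_of_mem_Ioo ⟨by linarith, hβπ⟩
  have hkR : (1:ℝ) ≤ (k:ℝ) := by exact_mod_cast hk
  have hkPhi : 0 < (k:ℝ) + Phi := by linarith [Phi_pos]
  have hlam_pos : 0 < lam := by rw [hlam]; positivity
  have hlamk : lam * ((k:ℝ) + Phi) = 1 := by rw [hlam]; field_simp
  have heta2 : eta = Phi * lam := by rw [heta]; nlinarith [hlamk]
  refine ⟨Phi^2 * lam * s^2 / (4*c),
    div_pos (mul_pos (mul_pos Phi_sq_pos hlam_pos) (pow_pos hs 2)) (by linarith), ?_⟩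
  intro z hz hzy
  have hzim : 0 < z.im := Pc_im_pos hpos hsum hz
  obtain ⟨j, hj⟩ := mem_iUnion.mp hz
  obtain ⟨hwPc, hwim, hwabs⟩ := Emap_props hpos hsum hd τ hzim hj
  set w := Emap α τ z with hw
  -- bound on im w
  have hzargs := (Pc_sub hpos hz).2
  have hz0 : z ≠ 0 := fun h => by simp [h] at hzim
  have hsinz : s ≤ Real.sin z.arg := sin_ge_sin_beta hd hpos hsum hzargs.1 hzargs.2
  have hzim_eq : z.im = ‖z‖ * Real.sin z.arg := (Complex.norm_mul_sin_arg _).symm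
  have habs_le : ‖z‖ * s ≤ z.im := by
    rw [hzim_eq]
    exact mul_le_mul_of_nonneg_left hsinz (norm_nonneg z)
  have hwim_le : w.im * s ≤ z.im := by
    have h1 : w.im ≤ ‖w‖ := Complex.im_le_norm w
    rw [hwabs] at h1
    nlinarith [norm_nonneg z]
  set δ : ℝ := w.im * c / s with hδ
  set lo : ℝ := (w.re - δ)/lam with hlo
  set hi : ℝ := (w.re + δ)/lam with hhi
  have hδpos : 0 < δ := by rw [hδ]; positivity
  have hsmall : 2*δ < Phi^2 * lam := by
    rw [hδ]
    rw [lt_div_iff₀ (by positivity : (0:ℝ) < 4*c)] at hzy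
    rw [show (2:ℝ)*(w.im*c/s) = (2*w.im*c)/s by ring, div_lt_iff₀ hs]
    nlinarith [mul_le_mul_of_nonneg_right hwim_le hc.le, hs, hc, hzy, hwim, hzim]
  obtain ⟨hne1, hlo0, hhi0, hloP, hhiP, hor, hR1⟩ :=
    master hd hpos hsum hk hlam_pos hlamk heta2 hz hδ hlo hhi hsmall
  -- the rescaled point
  set z' : ℂ := ((Phi^2 : ℝ) : ℂ) * z with hz'
  have hz'im : z'.im = Phi^2 * z.im := by
    rw [hz']
    simp [Complex.mul_im, ← Complex.ofReal_pow]
  have hz'arg : z'.arg = z.arg := by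
    rw [hz']
    exact Complex.arg_real_mul z Phi_sq_pos
  have hz'm : z' ∈ Pmid α j := by
    obtain ⟨h1, h2, h3⟩ := hj
    refine ⟨?_, ?_, ?_⟩
    · rw [hz'im]; nlinarith [Phi_sq_pos]
    · rwa [hz'arg]
    · rwa [hz'arg]
  have hz'Pc : z' ∈ Pc α := mem_iUnion.mpr ⟨j, hz'm⟩
  have hw' : Emap α τ z' = ((Phi^2 : ℝ) : ℂ) * w := by
    rw [Emap_eq_of_mem hpos hz'm, hw, Emap_eq_of_mem hpos hj, hz']
    ring
  have hw're : (Emap α τ z').re = Phi^2 * w.re := by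
    rw [hw']
    simp [Complex.mul_re, ← Complex.ofReal_pow]
  have hw'im : (Emap α τ z').im = Phi^2 * w.im := by
    rw [hw']
    simp [Complex.mul_im, ← Complex.ofReal_pow]
  have hδ' : Phi^2 * δ = (Emap α τ z').im * c / s := by
    rw [hw'im, hδ]
    ring
  have hlo' : Phi^2 * lo = ((Emap α τ z').re - Phi^2 * δ)/lam := by
    rw [hw're, hlo]
    field_simp
  have hhi' : Phi^2 * hi = ((Emap α τ z').re + Phi^2 * δ)/lam := by
    rw [hw're, hhi]
    field_simp
  have hsmall' : 2*(Phi^2 * δ) < Phi^2 * lam := by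
    nlinarith [Phi_sq_pos, Phi_sq_lt_half, hδpos, hsmall]
  obtain ⟨hne2, _, _, _, _, _, hR2⟩ :=
    master hd hpos hsum hk hlam_pos hlamk heta2 hz'Pc hδ' hlo' hhi' hsmall'
  obtain ⟨_, _, hxi_eq⟩ := transfer hlo0 hhi0 hloP hhiP hor
  refine ⟨hne1, hne2, ?_⟩
  rw [hR2, hR1, hxi_eq, hw']
  push_cast
  ring

end
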